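/- Let f : X → X be a function on a set X, let n ≥ 1, and let P ⊆ X be a finite subset such that f(P) ⊆ P and f^n(x) = x for every x ∈ P. Let Z ⊆ X and let δ > 0 be a real number with |P ∩ Z| ≥ δ·|P|. Then for every natural number N ≥ 2 with N·δ > 2 there exist indices 1 ≤ s < t ≤ N such that |P ∩ f^s(Z) ∩ f^t(Z)| ≥ (δ/(N−1))·|P|, where f^s(Z) denotes the image of Z under the s-th iterate of f. -/

import Mathlib

/-- If a finite `f`-invariant set `P` of points fixed by `f^[n]` meets `Z` in at least
`δ|P|` points, then for any `N ≥ 2` with `N·δ > 2` there are `1 ≤ s < t ≤ N` such that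
`|P ∩ f^[s](Z) ∩ f^[t](Z)| ≥ (δ/(N−1))·|P|`. -/
theorem exists_large_intersection_of_images
    {X : Type*} (f : X → X) (n : ℕ) (hn : 1 ≤ n)
    (P : Set X) (hPfin : P.Finite)
    (hinv : f '' P ⊆ P) (hper : ∀ x ∈ P, f^[n] x = x)
    (Z : Set X) (δ : ℝ) (hδ : 0 < δ)
    (hZ : δ * (P.ncard : ℝ) ≤ ((P ∩ Z).ncard : ℝ)) :
    ∀ N : ℕ, 2 ≤ N → 2 < (N : ℝ) * δ →
      ∃ s t : ℕ, 1 ≤ s ∧ s < t ∧ t ≤ N ∧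
        (δ / ((N : ℝ) - 1)) * (P.ncard : ℝ)
          ≤ ((P ∩ (f^[s] '' Z) ∩ (f^[t] '' Z)).ncard : ℝ) := by
  classical
  intro N hN2 hNδ
  set Pf : Finset X := hPfin.toFinset with hPfdef
  have hmemPf : ∀ x, x ∈ Pf ↔ x ∈ P := fun x => hPfin.mem_toFinset
  have hPcard : P.ncard = Pf.card := Set.ncard_eq_toFinset_card P hPfin
  -- helper: (P ∩ W).ncard = card of filter
  have hPW : ∀ W : Set X, (P ∩ W).ncard = (Pf.filter (fun x => x ∈ W)).card := by
    intro W
    have hfin : (P ∩ W).Finite := hPfin.subset Set.inter_subset_left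
    rw [Set.ncard_eq_toFinset_card _ hfin]
    congr 1
    ext x
    simp [hfin.mem_toFinset, hmemPf x, Finset.mem_filter]
  -- p = 0 case
  rcases Nat.eq_zero_or_pos Pf.card with hp0 | hppos
  · refine ⟨1, 2, le_refl 1, one_lt_two, hN2, ?_⟩
    rw [hPcard, hp0]
    simp
  -- invariance and injectivity facts
  have hmaps : ∀ k, ∀ x ∈ P, f^[k] x ∈ P := by
    intro k
    induction k with
    | zero => intro x hx; simpa using hx
    | succ k ih =>
      intro x hx
      rw [Function.iterate_succ_apply']
      exact hinv ⟨_, ih x hx, rfl⟩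
  have hfixmul : ∀ k, ∀ x ∈ P, f^[n * k] x = x := by
    intro k
    induction k with
    | zero => intro x hx; simp
    | succ k ih =>
      intro x hx
      have : n * (k + 1) = n * k + n := by ring
      rw [this, Function.iterate_add_apply, hper x hx, ih x hx]
  have hinj : ∀ s : ℕ, Set.InjOn (f^[s]) P := by
    intro s x hx y hy h
    have h2 : f^[s * (n - 1)] (f^[s] x) = f^[s * (n - 1)] (f^[s] y) := by rw [h]
    rw [← Function.iterate_add_apply, ← Function.iterate_add_apply] at h2
    have hsn : s * (n - 1) + s = n * s := by
      have : (n - 1) + 1 = n := Nat.succ_pred_eq_of_pos hn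
      calc s * (n - 1) + s = s * ((n - 1) + 1) := by ring
        _ = n * s := by rw [this]; ring
    rw [hsn, hfixmul s x hx, hfixmul s y hy] at h2
    exact h2
  -- the A sets
  set A : ℕ → Finset X := fun s => Pf.filter (fun x => x ∈ f^[s] '' Z) with hA
  have hAlower : ∀ s : ℕ, δ * (Pf.card : ℝ) ≤ ((A s).card : ℝ) := by
    intro s
    have hsub : f^[s] '' (P ∩ Z) ⊆ P ∩ f^[s] '' Z := by
      rintro _ ⟨x, ⟨hxP, hxZ⟩, rfl⟩
      exact ⟨hmaps s x hxP, ⟨x, hxZ, rfl⟩⟩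
    have hfin : (P ∩ f^[s] '' Z).Finite := hPfin.subset Set.inter_subset_left
    have h1 : (P ∩ Z).ncard = (f^[s] '' (P ∩ Z)).ncard :=
      (Set.ncard_image_of_injOn ((hinj s).mono Set.inter_subset_left)).symm
    have h2 : (f^[s] '' (P ∩ Z)).ncard ≤ (P ∩ f^[s] '' Z).ncard :=
      Set.ncard_le_ncard hsub hfin
    have h3 : (P ∩ f^[s] '' Z).ncard = (A s).card := hPW _
    have : (P ∩ Z).ncard ≤ (A s).card := by omega
    calc δ * (Pf.card : ℝ) = δ * (P.ncard : ℝ) := by rw [hPcard]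
      _ ≤ ((P ∩ Z).ncard : ℝ) := hZ
      _ ≤ ((A s).card : ℝ) := by exact_mod_cast this
  set S : Finset ℕ := Finset.Icc 1 N with hS
  have hScard : S.card = N := by simp [hS]
  set G : X → Finset ℕ := fun x => S.filter (fun s => x ∈ f^[s] '' Z) with hG
  -- double counting
  have sum1 : ∑ s ∈ S, (A s).card = ∑ x ∈ Pf, (G x).card := by
    simp only [hA, hG, Finset.card_filter]
    exact Finset.sum_comm
  have sum2 : ∑ q ∈ S.offDiag, (A q.1 ∩ A q.2).card
      = ∑ x ∈ Pf, ((G x).offDiag).card := by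
    have step1 : ∀ q : ℕ × ℕ, A q.1 ∩ A q.2
        = Pf.filter (fun x => x ∈ f^[q.1] '' Z ∧ x ∈ f^[q.2] '' Z) := by
      intro q; simp [hA, Finset.filter_and]
    calc ∑ q ∈ S.offDiag, (A q.1 ∩ A q.2).card
        = ∑ q ∈ S.offDiag, ∑ x ∈ Pf,
            (if x ∈ f^[q.1] '' Z ∧ x ∈ f^[q.2] '' Z then 1 else 0) := by
          simp only [step1, Finset.card_filter]
      _ = ∑ x ∈ Pf, ∑ q ∈ S.offDiag,
            (if x ∈ f^[q.1] '' Z ∧ x ∈ f^[q.2] '' Z then 1 else 0) := Finset.sum_comm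
      _ = ∑ x ∈ Pf, ((G x).offDiag).card := by
          apply Finset.sum_congr rfl
          intro x _
          rw [← Finset.card_filter]
          congr 1
          ext q
          simp only [Finset.mem_filter, Finset.mem_offDiag, hG]
          tauto
  have pointwise : ∀ g : ℕ, 2 * g ≤ 2 + (g * g - g) := by
    intro g
    rcases le_or_gt g 2 with h | h
    · interval_cases g <;> simp
    · have h3 : 3 * g ≤ g * g := Nat.mul_le_mul_right g h
      obtain ⟨m, hm⟩ : ∃ m, g * g = m := ⟨_, rfl⟩
      rw [hm] at h3 ⊢
      omega
  have key : 2 * ∑ s ∈ S, (A s).card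
      ≤ 2 * Pf.card + ∑ q ∈ S.offDiag, (A q.1 ∩ A q.2).card := by
    rw [sum1, sum2, Finset.mul_sum]
    calc ∑ x ∈ Pf, 2 * (G x).card
        ≤ ∑ x ∈ Pf, (2 + ((G x).offDiag).card) := by
          apply Finset.sum_le_sum
          intro x _
          rw [Finset.offDiag_card]
          exact pointwise _
      _ = 2 * Pf.card + ∑ x ∈ Pf, ((G x).offDiag).card := by
          rw [Finset.sum_add_distrib]
          simp [Finset.sum_const, mul_comm]
  -- by contradiction
  by_contra hcon
  push_neg at hcon
  have hAineq : ∀ s t : ℕ, 1 ≤ s → s < t → t ≤ N →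
      (((A s ∩ A t).card : ℝ)) < δ / ((N : ℝ) - 1) * (Pf.card : ℝ) := by
    intro s t h1 h2 h3
    have := hcon s t h1 h2 h3
    have heq : (P ∩ f^[s] '' Z ∩ f^[t] '' Z).ncard = (A s ∩ A t).card := by
      rw [Set.inter_assoc, hPW]
      congr 1
      simp [hA, Finset.filter_and]
    rw [heq, hPcard] at this
    exact this
  have hoffbound : ∀ q ∈ S.offDiag,
      (((A q.1 ∩ A q.2).card : ℝ)) < δ / ((N : ℝ) - 1) * (Pf.card : ℝ) := by
    intro q hq
    rw [Finset.mem_offDiag] at hq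
    obtain ⟨hq1, hq2, hne⟩ := hq
    rw [Finset.mem_Icc] at hq1 hq2
    rcases lt_or_gt_of_ne hne with h | h
    · exact hAineq q.1 q.2 hq1.1 h hq2.2
    · rw [Finset.inter_comm]
      exact hAineq q.2 q.1 hq2.1 h hq1.2
  have hSoffne : S.offDiag.Nonempty := by
    refine ⟨(1, 2), ?_⟩
    rw [Finset.mem_offDiag]
    refine ⟨?_, ?_, by norm_num⟩ <;> simp [hS] <;> omega
  have hoffcard : (S.offDiag.card : ℝ) = (N : ℝ) * ((N : ℝ) - 1) := by
    rw [Finset.offDiag_card, hScard]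
    have h1 : N ≤ N * N := Nat.le_mul_of_pos_left N (by omega)
    rw [Nat.cast_sub h1]
    push_cast
    ring
  have hsumoff : (∑ q ∈ S.offDiag, ((A q.1 ∩ A q.2).card : ℝ))
      < (N : ℝ) * δ * (Pf.card : ℝ) := by
    calc (∑ q ∈ S.offDiag, ((A q.1 ∩ A q.2).card : ℝ))
        < ∑ _q ∈ S.offDiag, δ / ((N : ℝ) - 1) * (Pf.card : ℝ) :=
          Finset.sum_lt_sum_of_nonempty hSoffne hoffbound
      _ = (S.offDiag.card : ℝ) * (δ / ((N : ℝ) - 1) * (Pf.card : ℝ)) := by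
          rw [Finset.sum_const, nsmul_eq_mul]
      _ = (N : ℝ) * δ * (Pf.card : ℝ) := by
          rw [hoffcard]
          have hN1 : (N : ℝ) - 1 ≠ 0 := by
            have : (2 : ℝ) ≤ (N : ℝ) := by exact_mod_cast hN2
            linarith
          field_simp
  have hsumA : (N : ℝ) * (δ * (Pf.card : ℝ)) ≤ ∑ s ∈ S, ((A s).card : ℝ) := by
    calc (N : ℝ) * (δ * (Pf.card : ℝ))
        = ∑ _s ∈ S, δ * (Pf.card : ℝ) := by rw [Finset.sum_const, hScard, nsmul_eq_mul]
      _ ≤ ∑ s ∈ S, ((A s).card : ℝ) := Finset.sum_le_sum (fun s _ => hAlower s)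
  have keyR : 2 * ∑ s ∈ S, ((A s).card : ℝ)
      ≤ 2 * (Pf.card : ℝ) + ∑ q ∈ S.offDiag, ((A q.1 ∩ A q.2).card : ℝ) := by
    exact_mod_cast key
  have hpR : (0 : ℝ) < (Pf.card : ℝ) := by exact_mod_cast hppos
  nlinarith [hsumA, keyR, hsumoff, hpR, hNδ]
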